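/- Let (G_j)_{j∈ℕ} be a countable family of countable MF-groups. Then the restricted direct product ⨁_j G_j, i.e., the subgroup of ∏_{j∈ℕ} G_j consisting of those elements g with g_j = 1 for all but finitely many j, is an MF-group. -/

import Mathlib

open Filter

/-- The operator norm (as operators on `ℂⁿ` with the `ℓ²` norm) of a complex matrix. -/
noncomputable def matOpNorm {N : Type*} [Fintype N] [DecidableEq N]
    (A : Matrix N N ℂ) : ℝ :=
  ‖Matrix.toEuclideanCLM (𝕜 := ℂ) (n := N) A‖

/-- A sequence of maps `αₘ : G → U(d m)` is an asymptotic representation if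
`‖αₘ(gh) − αₘ(g)αₘ(h)‖ → 0` for all `g h : G`. -/
def IsAsymptoticRep {G : Type*} [Group G] (d : ℕ → ℕ)
    (α : ∀ m : ℕ, G → Matrix.unitaryGroup (Fin (d m)) ℂ) : Prop :=
  ∀ g h : G,
    Tendsto (fun m : ℕ =>
      matOpNorm ((α m (g * h) : Matrix (Fin (d m)) (Fin (d m)) ℂ) -
        (α m g : Matrix (Fin (d m)) (Fin (d m)) ℂ) *
        (α m h : Matrix (Fin (d m)) (Fin (d m)) ℂ)))
      atTop (nhds 0)

/-- A group is MF if it admits an asymptotic representation `(αₘ)` such that, for every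
`g ≠ 1`, `‖αₘ(g) − 1‖` does not converge to `0`. -/
def IsMFGroup (G : Type*) [Group G] : Prop :=
  ∃ (d : ℕ → ℕ) (α : ∀ m : ℕ, G → Matrix.unitaryGroup (Fin (d m)) ℂ),
    IsAsymptoticRep d α ∧
    ∀ g : G, g ≠ 1 →
      ¬ Tendsto (fun m : ℕ =>
          matOpNorm ((α m g : Matrix (Fin (d m)) (Fin (d m)) ℂ) - 1))
        atTop (nhds 0)

/-- The restricted direct product `⨁ⱼ Gⱼ`: the subgroup of `∏ⱼ Gⱼ` consisting of those
elements `g` with `g j = 1` for all but finitely many `j`. -/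
def restrictedProduct (G : ℕ → Type*) [∀ j, Group (G j)] : Subgroup (∀ j, G j) where
  carrier := {g | {j | g j ≠ 1}.Finite}
  one_mem' := by simp
  mul_mem' := by
    intro a b ha hb
    refine Set.Finite.subset (ha.union hb) fun j hj => ?_
    simp only [Set.mem_setOf_eq, Pi.mul_apply, Set.mem_union, ne_eq] at hj ⊢
    by_contra hc
    push_neg at hc
    exact hj (by rw [hc.1, hc.2, one_mul])
  inv_mem' := by
    intro a ha
    refine ha.subset fun j hj => ?_
    simpa only [Set.mem_setOf_eq, Pi.inv_apply, ne_eq, inv_eq_one] using hj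

/-! ### Auxiliary matrix-norm machinery -/

namespace MFAux

open Matrix
open scoped Matrix.Norms.L2Operator

set_option linter.unusedSectionVars false

noncomputable instance {n : Type*} [Fintype n] [DecidableEq n] :
    CStarAlgebra (Matrix n n ℂ) where
  complete := (FiniteDimensional.complete ℂ (Matrix n n ℂ)).complete

section basic
variable {n : Type*} [Fintype n] [DecidableEq n]

lemma matOpNorm_def (A : Matrix n n ℂ) : matOpNorm A = ‖A‖ := rfl

lemma norm_one_le : ‖(1 : Matrix n n ℂ)‖ ≤ 1 := by
  rw [Matrix.cstar_norm_def, _root_.map_one]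
  exact ContinuousLinearMap.norm_id_le

lemma norm_unitary_le {A : Matrix n n ℂ} (hA : A ∈ Matrix.unitaryGroup n ℂ) : ‖A‖ ≤ 1 := by
  have h1 : star A * A = 1 := hA.1
  have h2 : ‖star A * A‖ = ‖A‖ * ‖A‖ := CStarRing.norm_star_mul_self
  rw [h1] at h2
  nlinarith [norm_one_le (n := n), norm_nonneg A, norm_nonneg (1 : Matrix n n ℂ)]
end basic

section reindex
variable {n m : Type*} [Fintype n] [DecidableEq n] [Fintype m] [DecidableEq m]

/-- reindexing as a star algebra equivalence -/
def reindexSAE (e : n ≃ m) : Matrix n n ℂ ≃⋆ₐ[ℂ] Matrix m m ℂ :=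
  { Matrix.reindexAlgEquiv ℂ ℂ e with
    map_star' := fun A => Matrix.conjTranspose_reindex e e A
    map_smul' := fun c A => map_smul (Matrix.reindexAlgEquiv ℂ ℂ e) c A }

lemma reindexSAE_apply (e : n ≃ m) (A : Matrix n n ℂ) :
    reindexSAE e A = Matrix.reindex e e A := by
  simp [reindexSAE, Matrix.reindexAlgEquiv_apply]

lemma norm_reindexSAE (e : n ≃ m) (A : Matrix n n ℂ) :
    ‖reindexSAE e A‖ = ‖A‖ :=
  NonUnitalStarAlgHom.norm_map (reindexSAE e) (reindexSAE e).injective A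

lemma reindexSAE_mem_unitary (e : n ≃ m) {A : Matrix n n ℂ}
    (hA : A ∈ Matrix.unitaryGroup n ℂ) :
    reindexSAE e A ∈ Matrix.unitaryGroup m ℂ := by
  constructor
  · rw [← map_star, ← _root_.map_mul, hA.1, _root_.map_one]
  · rw [← map_star, ← _root_.map_mul, hA.2, _root_.map_one]
end reindex

section blocks
variable {J : Type*} [Fintype J] [DecidableEq J] {N : J → Type*}
  [∀ j, Fintype (N j)] [∀ j, DecidableEq (N j)]

lemma single_mul_single (j : J) (A B : Matrix (N j) (N j) ℂ) :
    Pi.single (M := fun k => Matrix (N k) (N k) ℂ) j (A * B) =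
      fun k => Pi.single j A k * Pi.single j B k := by
  funext k
  by_cases h : k = j
  · subst h; simp
  · simp [Pi.single_eq_of_ne h]

lemma single_star (j : J) (A : Matrix (N j) (N j) ℂ) :
    Pi.single (M := fun k => Matrix (N k) (N k) ℂ) j Aᴴ =
      fun k => (Pi.single (M := fun k => Matrix (N k) (N k) ℂ) j A k)ᴴ := by
  funext k
  by_cases h : k = j
  · subst h; simp
  · simp [Pi.single_eq_of_ne h]

/-- embedding of the `j`-th block as a non-unital star algebra hom. -/
noncomputable def blockHom (j : J) :
    Matrix (N j) (N j) ℂ →⋆ₙₐ[ℂ] Matrix ((k : J) × N k) ((k : J) × N k) ℂ where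
  toFun B := Matrix.blockDiagonal' (Pi.single j B)
  map_add' A B := by
    show Matrix.blockDiagonal' (Pi.single j (A + B)) = _
    rw [Pi.single_add, Matrix.blockDiagonal'_add]
  map_mul' A B := by
    show Matrix.blockDiagonal' (Pi.single j (A * B)) = _
    rw [← Matrix.blockDiagonal'_mul, single_mul_single]
  map_zero' := by
    show Matrix.blockDiagonal' (Pi.single j (0 : Matrix (N j) (N j) ℂ)) = _
    rw [Pi.single_zero, Matrix.blockDiagonal'_zero]
  map_smul' c A := by
    show Matrix.blockDiagonal' (Pi.single j (c • A)) = _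
    rw [Pi.single_smul, Matrix.blockDiagonal'_smul]; rfl
  map_star' A := by
    show Matrix.blockDiagonal' (Pi.single j (star A)) = star (Matrix.blockDiagonal' _)
    show Matrix.blockDiagonal' (Pi.single j Aᴴ) = (Matrix.blockDiagonal' _)ᴴ
    rw [Matrix.blockDiagonal'_conjTranspose, single_star]

lemma blockHom_injective (j : J) : Function.Injective (blockHom (N := N) j) := by
  intro A B h
  have h2 := congrFun (Matrix.blockDiagonal'_injective (α := ℂ) h) j
  simpa using h2

lemma norm_blockHom (j : J) (B : Matrix (N j) (N j) ℂ) :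
    ‖Matrix.blockDiagonal' (Pi.single j B)‖ = ‖B‖ :=
  NonUnitalStarAlgHom.norm_map (blockHom j) (blockHom_injective j) B

/-- the block projection -/
noncomputable def Pblock (j : J) : Matrix ((k : J) × N k) ((k : J) × N k) ℂ :=
  Matrix.blockDiagonal' (Pi.single j (1 : Matrix (N j) (N j) ℂ))

lemma Pblock_star (j : J) : star (Pblock (N := N) j) = Pblock j := by
  show (Matrix.blockDiagonal' _)ᴴ = _
  rw [Matrix.blockDiagonal'_conjTranspose]
  unfold Pblock
  have : (fun k => (Pi.single (M := fun k => Matrix (N k) (N k) ℂ) j 1 k)ᴴ) =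
      Pi.single (M := fun k => Matrix (N k) (N k) ℂ) j 1 := by
    funext k
    by_cases h : k = j
    · subst h; simp
    · simp [Pi.single_eq_of_ne h]
  rw [this]

lemma Pblock_mul_self (j : J) : Pblock (N := N) j * Pblock j = Pblock j := by
  unfold Pblock
  rw [← Matrix.blockDiagonal'_mul]
  have : (fun k => Pi.single (M := fun k => Matrix (N k) (N k) ℂ) j 1 k *
      Pi.single (M := fun k => Matrix (N k) (N k) ℂ) j 1 k) =
      Pi.single (M := fun k => Matrix (N k) (N k) ℂ) j 1 := by
    funext k
    by_cases h : k = j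
    · subst h; simp
    · simp [Pi.single_eq_of_ne h]
  rw [this]

lemma norm_Pblock_le (j : J) : ‖Pblock (N := N) j‖ ≤ 1 := by
  have h : ‖Pblock (N := N) j‖ * ‖Pblock (N := N) j‖ = ‖Pblock (N := N) j‖ := by
    rw [← CStarRing.norm_star_mul_self, Pblock_star, Pblock_mul_self]
  nlinarith [norm_nonneg (Pblock (N := N) j)]

lemma Pblock_compress (j : J) (M : ∀ k, Matrix (N k) (N k) ℂ) :
    Pblock j * Matrix.blockDiagonal' M * Pblock j =
      Matrix.blockDiagonal' (Pi.single j (M j)) := by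
  unfold Pblock
  rw [← Matrix.blockDiagonal'_mul, ← Matrix.blockDiagonal'_mul]
  have : (fun k => Pi.single (M := fun k => Matrix (N k) (N k) ℂ) j 1 k * M k *
      Pi.single (M := fun k => Matrix (N k) (N k) ℂ) j 1 k) =
      Pi.single (M := fun k => Matrix (N k) (N k) ℂ) j (M j) := by
    funext k
    by_cases h : k = j
    · subst h; simp
    · simp [Pi.single_eq_of_ne h]
  rw [this]

/-- lower bound: each block norm is at most the norm of the block diagonal matrix -/
lemma norm_block_le (M : ∀ k, Matrix (N k) (N k) ℂ) (j : J) :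
    ‖M j‖ ≤ ‖Matrix.blockDiagonal' M‖ := by
  rw [← norm_blockHom j (M j), ← Pblock_compress j M]
  have h1 : ‖Pblock (N := N) j * Matrix.blockDiagonal' M * Pblock j‖ ≤
      ‖Pblock (N := N) j‖ * ‖Matrix.blockDiagonal' M‖ * ‖Pblock (N := N) j‖ := by
    calc ‖Pblock (N := N) j * Matrix.blockDiagonal' M * Pblock j‖
        ≤ ‖Pblock (N := N) j * Matrix.blockDiagonal' M‖ * ‖Pblock (N := N) j‖ :=
          norm_mul_le _ _
      _ ≤ ‖Pblock (N := N) j‖ * ‖Matrix.blockDiagonal' M‖ * ‖Pblock (N := N) j‖ := by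
          gcongr
          exact norm_mul_le _ _
  refine h1.trans ?_
  have hP := norm_Pblock_le (N := N) j
  have h0 := norm_nonneg (Pblock (N := N) j)
  have h2 := norm_nonneg (Matrix.blockDiagonal' M)
  nlinarith [mul_le_mul hP hP h0 (zero_le_one (α := ℝ)), mul_nonneg h0 h2]

/-- upper bound: the norm of the block diagonal matrix is at most the sum of block norms -/
lemma norm_blockDiagonal'_le_sum (M : ∀ k, Matrix (N k) (N k) ℂ) :
    ‖Matrix.blockDiagonal' M‖ ≤ ∑ j, ‖M j‖ := by
  have hM : M = ∑ j, Pi.single j (M j) := (Finset.univ_sum_single M).symm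
  have key : Matrix.blockDiagonal' M = ∑ j, Matrix.blockDiagonal' (Pi.single j (M j)) := by
    conv_lhs => rw [hM]
    exact map_sum (AddMonoidHom.mk'
      (fun M : ∀ k, Matrix (N k) (N k) ℂ =>
        (Matrix.blockDiagonal' M : Matrix ((k : J) × N k) ((k : J) × N k) ℂ))
      (fun A B => Matrix.blockDiagonal'_add A B)) _ _
  rw [key]
  refine (norm_sum_le _ _).trans ?_
  exact Finset.sum_le_sum fun j _ => le_of_eq (norm_blockHom j (M j))

lemma blockDiagonal'_mem_unitary (M : ∀ k, Matrix (N k) (N k) ℂ)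
    (hM : ∀ k, M k ∈ Matrix.unitaryGroup (N k) ℂ) :
    Matrix.blockDiagonal' M ∈ Matrix.unitaryGroup ((k : J) × N k) ℂ := by
  have hone : (fun k => (1 : Matrix (N k) (N k) ℂ)) = (1 : ∀ k, Matrix (N k) (N k) ℂ) := rfl
  constructor
  · show (Matrix.blockDiagonal' M)ᴴ * _ = _
    rw [Matrix.blockDiagonal'_conjTranspose, ← Matrix.blockDiagonal'_mul]
    rw [show (fun k => (M k)ᴴ * M k) = fun k => (1 : Matrix (N k) (N k) ℂ) from
      funext fun k => (hM k).1, hone, Matrix.blockDiagonal'_one]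
  · show _ * (Matrix.blockDiagonal' M)ᴴ = _
    rw [Matrix.blockDiagonal'_conjTranspose, ← Matrix.blockDiagonal'_mul]
    rw [show (fun k => M k * (M k)ᴴ) = fun k => (1 : Matrix (N k) (N k) ℂ) from
      funext fun k => (hM k).2, hone, Matrix.blockDiagonal'_one]

end blocks

/-! ### Asymptotic representation lemmas -/

section asympt
variable {G : Type*} [Group G]

/-- For an asymptotic representation, `‖α m 1 - 1‖ → 0`. -/
lemma tendsto_one_of_asymptoticRep {d : ℕ → ℕ}
    {α : ∀ m : ℕ, G → Matrix.unitaryGroup (Fin (d m)) ℂ} (hα : IsAsymptoticRep d α) :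
    Tendsto (fun m : ℕ =>
      matOpNorm ((α m 1 : Matrix (Fin (d m)) (Fin (d m)) ℂ) - 1)) atTop (nhds 0) := by
  have h := hα 1 1
  rw [one_mul] at h
  refine squeeze_zero (fun m => by rw [matOpNorm_def]; exact norm_nonneg _) (fun m => ?_) h
  set u : Matrix (Fin (d m)) (Fin (d m)) ℂ := (α m 1 : Matrix (Fin (d m)) (Fin (d m)) ℂ)
  have hu : u ∈ Matrix.unitaryGroup (Fin (d m)) ℂ := (α m 1).2
  have key : u - 1 = star u * (u * u - u) := by
    have h4 : star u * (u * u - u) = star u * u * u - star u * u := by noncomm_ring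
    rw [h4, hu.1, one_mul]
  rw [matOpNorm_def, matOpNorm_def, key]
  calc ‖star u * (u * u - u)‖ ≤ ‖star u‖ * ‖u * u - u‖ := norm_mul_le _ _
    _ ≤ 1 * ‖u * u - u‖ := by
        gcongr
        exact norm_unitary_le (Unitary.star_mem hu)
    _ = ‖u - u * u‖ := by rw [one_mul, norm_sub_rev]

open Classical in
/-- normalization sending `1` to `1`. -/
noncomputable def nrm {k : ℕ} (u : G → Matrix.unitaryGroup (Fin k) ℂ) :
    G → Matrix.unitaryGroup (Fin k) ℂ :=
  fun g => if g = 1 then 1 else u g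

lemma nrm_one {k : ℕ} (u : G → Matrix.unitaryGroup (Fin k) ℂ) : nrm u 1 = 1 := by
  simp [nrm]

lemma nrm_ne {k : ℕ} (u : G → Matrix.unitaryGroup (Fin k) ℂ) {g : G} (hg : g ≠ 1) :
    nrm u g = u g := by
  simp [nrm, hg]

/-- The normalization of an asymptotic representation is an asymptotic representation. -/
lemma nrm_asymptoticRep {d : ℕ → ℕ}
    {α : ∀ m : ℕ, G → Matrix.unitaryGroup (Fin (d m)) ℂ} (hα : IsAsymptoticRep d α) :
    IsAsymptoticRep d (fun m => nrm (α m)) := by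
  intro g h
  by_cases hg : g = 1
  · subst hg
    rw [show (fun m : ℕ => matOpNorm (((nrm (α m)) (1 * h) : Matrix (Fin (d m)) (Fin (d m)) ℂ) -
        ((nrm (α m)) 1 : Matrix (Fin (d m)) (Fin (d m)) ℂ) *
        ((nrm (α m)) h : Matrix (Fin (d m)) (Fin (d m)) ℂ))) = fun _ => 0 from
      funext fun m => by simp [nrm_one, one_mul, matOpNorm_def]]
    exact tendsto_const_nhds
  by_cases hh : h = 1
  · subst hh
    rw [show (fun m : ℕ => matOpNorm (((nrm (α m)) (g * 1) : Matrix (Fin (d m)) (Fin (d m)) ℂ) -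
        ((nrm (α m)) g : Matrix (Fin (d m)) (Fin (d m)) ℂ) *
        ((nrm (α m)) 1 : Matrix (Fin (d m)) (Fin (d m)) ℂ))) = fun _ => 0 from
      funext fun m => by simp [nrm_one, mul_one, matOpNorm_def]]
    exact tendsto_const_nhds
  by_cases hgh : g * h = 1
  · -- here nrm (g*h) = 1 while nrm g = α g, nrm h = α h
    have h1 : Tendsto (fun m : ℕ =>
        matOpNorm ((α m 1 : Matrix (Fin (d m)) (Fin (d m)) ℂ) - 1)) atTop (nhds 0) :=
      tendsto_one_of_asymptoticRep hα
    have h2 := hα g h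
    rw [hgh] at h2
    have h3 := h1.add h2
    rw [add_zero] at h3
    refine squeeze_zero (fun m => by rw [matOpNorm_def]; exact norm_nonneg _)
      (fun m => ?_) h3
    simp only [hgh, nrm_one, nrm_ne _ hg, nrm_ne _ hh, OneMemClass.coe_one, matOpNorm_def]
    calc ‖(1 : Matrix (Fin (d m)) (Fin (d m)) ℂ) -
          (α m g : Matrix (Fin (d m)) (Fin (d m)) ℂ) * (α m h : Matrix (Fin (d m)) (Fin (d m)) ℂ)‖
        ≤ ‖(1 : Matrix (Fin (d m)) (Fin (d m)) ℂ) - (α m 1 : Matrix (Fin (d m)) (Fin (d m)) ℂ)‖ +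
          ‖(α m 1 : Matrix (Fin (d m)) (Fin (d m)) ℂ) -
            (α m g : Matrix (Fin (d m)) (Fin (d m)) ℂ) *
            (α m h : Matrix (Fin (d m)) (Fin (d m)) ℂ)‖ :=
          norm_sub_le_norm_sub_add_norm_sub _ _ _
      _ ≤ _ := by rw [norm_sub_rev]
  · have heq : (fun m : ℕ => matOpNorm (((nrm (α m)) (g * h) : Matrix (Fin (d m)) (Fin (d m)) ℂ) -
        ((nrm (α m)) g : Matrix (Fin (d m)) (Fin (d m)) ℂ) *
        ((nrm (α m)) h : Matrix (Fin (d m)) (Fin (d m)) ℂ))) =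
        (fun m : ℕ => matOpNorm ((α m (g * h) : Matrix (Fin (d m)) (Fin (d m)) ℂ) -
        (α m g : Matrix (Fin (d m)) (Fin (d m)) ℂ) *
        (α m h : Matrix (Fin (d m)) (Fin (d m)) ℂ))) := by
      funext m
      rw [nrm_ne _ hgh, nrm_ne _ hg, nrm_ne _ hh]
    rw [heq]
    exact hα g h

end asympt

end MFAux

theorem stmt8 (G : ℕ → Type*) [∀ j, Group (G j)] [∀ j, Countable (G j)]
    (h : ∀ j, IsMFGroup (G j)) :
    IsMFGroup (restrictedProduct G) := by
  classical
  open MFAux Matrix in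
  open scoped Matrix.Norms.L2Operator in
  -- choose the asymptotic representations and normalize them
  choose d α₀ hrep₀ hne₀ using h
  set β : ∀ (j m : ℕ), G j → Matrix.unitaryGroup (Fin (d j m)) ℂ :=
    fun j m => MFAux.nrm (α₀ j m) with hβ
  have hβrep : ∀ j, IsAsymptoticRep (d j) (fun m => β j m) :=
    fun j => MFAux.nrm_asymptoticRep (hrep₀ j)
  have hβone : ∀ j m, β j m 1 = 1 := fun j m => MFAux.nrm_one (α₀ j m)
  have hβne : ∀ j m (x : G j), x ≠ 1 → β j m x = α₀ j m x :=
    fun j m x hx => MFAux.nrm_ne (α₀ j m) hx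
  -- dimensions and reindexing equivalences
  set D : ℕ → ℕ := fun m => ∑ j ∈ Finset.range (m + 1), d j m with hD
  have hcard : ∀ m : ℕ, Fintype.card ((j : Fin (m + 1)) × Fin (d j m)) = D m := by
    intro m
    rw [hD]
    simp [Fintype.card_sigma, Fin.sum_univ_eq_sum_range (fun j => d j m)]
  set em : ∀ m : ℕ, ((j : Fin (m + 1)) × Fin (d j m)) ≃ Fin (D m) :=
    fun m => Fintype.equivFinOfCardEq (hcard m) with hem
  -- the block diagonal asymptotic representation
  set Bl : ∀ m : ℕ, (∀ j, G j) → Matrix ((j : Fin (m + 1)) × Fin (d j m))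
      ((j : Fin (m + 1)) × Fin (d j m)) ℂ :=
    fun m x => Matrix.blockDiagonal'
      (fun j : Fin (m + 1) => (β j m (x j) : Matrix (Fin (d j m)) (Fin (d j m)) ℂ)) with hBl
  have hBlmem : ∀ m x, Bl m x ∈ Matrix.unitaryGroup _ ℂ := by
    intro m x
    exact MFAux.blockDiagonal'_mem_unitary _ (fun k => (β k m (x k)).2)
  set γ : ∀ m : ℕ, restrictedProduct G → Matrix.unitaryGroup (Fin (D m)) ℂ :=
    fun m g => ⟨MFAux.reindexSAE (em m) (Bl m (g : ∀ j, G j)),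
      MFAux.reindexSAE_mem_unitary (em m) (hBlmem m _)⟩ with hγ
  refine ⟨D, γ, ?_, ?_⟩
  · -- asymptotic representation property
    intro g h
    -- pointwise norms of blocks
    set c : ℕ → ℕ → ℝ := fun j m =>
      matOpNorm ((β j m ((g : ∀ j, G j) j * (h : ∀ j, G j) j) :
          Matrix (Fin (d j m)) (Fin (d j m)) ℂ) -
        (β j m ((g : ∀ j, G j) j) : Matrix (Fin (d j m)) (Fin (d j m)) ℂ) *
        (β j m ((h : ∀ j, G j) j) : Matrix (Fin (d j m)) (Fin (d j m)) ℂ)) with hc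
    have hgfin : {j | (g : ∀ j, G j) j ≠ 1}.Finite := g.2
    have hhfin : {j | (h : ∀ j, G j) j ≠ 1}.Finite := h.2
    set S : Finset ℕ := (hgfin.union hhfin).toFinset with hS
    have hczero : ∀ j ∉ S, ∀ m, c j m = 0 := by
      intro j hj m
      rw [hS] at hj
      simp only [Set.Finite.mem_toFinset, Set.mem_union, Set.mem_setOf_eq] at hj
      push_neg at hj
      rw [hc]
      simp only [hj.1, hj.2, one_mul, hβone, OneMemClass.coe_one, mul_one, sub_self]
      rw [matOpNorm_def]
      exact norm_zero
    have hctend : ∀ j, Tendsto (fun m => c j m) atTop (nhds 0) := fun j =>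
      hβrep j ((g : ∀ j, G j) j) ((h : ∀ j, G j) j)
    have hsum : Tendsto (fun m => ∑ j ∈ S, c j m) atTop (nhds 0) := by
      have := tendsto_finset_sum S (fun j _ => hctend j)
      simpa using this
    refine squeeze_zero (fun m => by rw [matOpNorm_def]; exact norm_nonneg _)
      (fun m => ?_) hsum
    -- identify the matrix difference as a block diagonal matrix
    have hmul : ((γ m (g * h) : Matrix (Fin (D m)) (Fin (D m)) ℂ) -
        (γ m g : Matrix (Fin (D m)) (Fin (D m)) ℂ) *
        (γ m h : Matrix (Fin (D m)) (Fin (D m)) ℂ)) =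
        MFAux.reindexSAE (em m) (Matrix.blockDiagonal'
          (fun j : Fin (m + 1) =>
            (β j m ((g : ∀ j, G j) j * (h : ∀ j, G j) j) :
                Matrix (Fin (d j m)) (Fin (d j m)) ℂ) -
            (β j m ((g : ∀ j, G j) j) : Matrix (Fin (d j m)) (Fin (d j m)) ℂ) *
            (β j m ((h : ∀ j, G j) j) : Matrix (Fin (d j m)) (Fin (d j m)) ℂ))) := by
      rw [hγ]
      simp only
      rw [← _root_.map_mul, ← map_sub]
      congr 1
      rw [hBl]
      simp only
      rw [← Matrix.blockDiagonal'_mul, ← Matrix.blockDiagonal'_sub]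
      rfl
    rw [hmul, matOpNorm_def, MFAux.norm_reindexSAE]
    refine (MFAux.norm_blockDiagonal'_le_sum _).trans ?_
    have hsum2 : ∑ j : Fin (m + 1),
        ‖(β j m ((g : ∀ j, G j) j * (h : ∀ j, G j) j) :
            Matrix (Fin (d j m)) (Fin (d j m)) ℂ) -
          (β j m ((g : ∀ j, G j) j) : Matrix (Fin (d j m)) (Fin (d j m)) ℂ) *
          (β j m ((h : ∀ j, G j) j) : Matrix (Fin (d j m)) (Fin (d j m)) ℂ)‖ =
        ∑ j ∈ Finset.range (m + 1), c j m := by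
      rw [← Fin.sum_univ_eq_sum_range (fun j => c j m)]
      rfl
    rw [hsum2]
    -- restrict to S
    have h1 : ∑ j ∈ Finset.range (m + 1), c j m =
        ∑ j ∈ Finset.range (m + 1) ∩ S, c j m := by
      refine (Finset.sum_subset Finset.inter_subset_left ?_).symm
      intro x hx hnx
      refine hczero x ?_ m
      intro hxS
      exact hnx (Finset.mem_inter.mpr ⟨hx, hxS⟩)
    rw [h1]
    refine Finset.sum_le_sum_of_subset_of_nonneg Finset.inter_subset_right ?_
    intro j _ _
    exact norm_nonneg _
  · -- non-vanishing property
    intro g hg htend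
    have hg1 : (g : ∀ j, G j) ≠ 1 := by
      intro hh
      exact hg (Subtype.ext hh)
    obtain ⟨j0, hj0⟩ := Function.ne_iff.mp hg1
    refine hne₀ j0 ((g : ∀ j, G j) j0) hj0 ?_
    refine squeeze_zero' (Eventually.of_forall fun m => by
        rw [matOpNorm_def]; exact norm_nonneg _) ?_ htend
    rw [eventually_atTop]
    refine ⟨j0, fun m hm => ?_⟩
    -- identify γ m g - 1 as a reindexed block diagonal matrix
    have hid : ((γ m g : Matrix (Fin (D m)) (Fin (D m)) ℂ) - 1) =
        MFAux.reindexSAE (em m) (Matrix.blockDiagonal'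
          (fun j : Fin (m + 1) =>
            (β j m ((g : ∀ j, G j) j) : Matrix (Fin (d j m)) (Fin (d j m)) ℂ) - 1)) := by
      rw [hγ]
      simp only
      rw [show (1 : Matrix (Fin (D m)) (Fin (D m)) ℂ) =
        MFAux.reindexSAE (em m) 1 from (_root_.map_one _).symm, ← map_sub]
      congr 1
      rw [hBl]
      simp only
      rw [← Matrix.blockDiagonal'_one (m' := fun j : Fin (m + 1) => Fin (d j m)) (α := ℂ),
        ← Matrix.blockDiagonal'_sub]
      rfl
    simp only [matOpNorm_def]
    rw [hid, MFAux.norm_reindexSAE]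
    have hlow := MFAux.norm_block_le
      (fun j : Fin (m + 1) =>
        (β j m ((g : ∀ j, G j) j) : Matrix (Fin (d j m)) (Fin (d j m)) ℂ) - 1)
      ⟨j0, Nat.lt_succ_of_le hm⟩
    rw [← hβne j0 m _ hj0]
    exact hlow
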